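/- Let K be a field of characteristic zero, R = K[x,y,z], and let a ≥ c ≥ 2 and α ∈ {1,2} be integers with c + α ≥ 4. Let I_1 = (x^a, y^3 − x^α z^{3−α}, z^c, x^{a−α} y^2, y^2 z^{c+α−3}) and set k = ⌊(a+c−1)/2⌋. Then h_{R/I_1}(k) = 3c−3 if a = c, and h_{R/I_1}(k) = 3c−3+α if a ≥ c+1. Moreover, if a ≥ c+3, then h_{R/I_1}(k) = h_{R/I_1}(k−1). -/

import Mathlib

open MvPolynomial

/-- The degree-`i` graded component of `R/I`, i.e. the image in `R/I` of the
space of homogeneous polynomials of degree `i`. -/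
noncomputable def grComponent (K : Type*) [Field K]
    (I : Ideal (MvPolynomial (Fin 3) K)) (i : ℕ) :
    Submodule K (MvPolynomial (Fin 3) K ⧸ I) :=
  (MvPolynomial.homogeneousSubmodule (Fin 3) K i).map
    (Ideal.Quotient.mkₐ K I).toLinearMap

/-- The Hilbert function of `R/I`. -/
noncomputable def hilb (K : Type*) [Field K]
    (I : Ideal (MvPolynomial (Fin 3) K)) (i : ℕ) : ℕ :=
  Module.finrank K (grComponent K I i)

/-- `R/I` has the weak Lefschetz property: there is a linear form `L` such that
for every `i`, multiplication by `L` from `[R/I]_i` to `[R/I]_{i+1}` is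
injective or surjective. -/
def hasWLP (K : Type*) [Field K] (I : Ideal (MvPolynomial (Fin 3) K)) : Prop :=
  ∃ L : MvPolynomial (Fin 3) K, L.IsHomogeneous 1 ∧
    ∀ i : ℕ,
      (∀ u ∈ grComponent K I i, ∀ v ∈ grComponent K I i,
          Ideal.Quotient.mk I L * u = Ideal.Quotient.mk I L * v → u = v) ∨
      (∀ w ∈ grComponent K I (i + 1), ∃ u ∈ grComponent K I i,
          Ideal.Quotient.mk I L * u = w)

open Finsupp

namespace Stmt10

variable (K : Type*) [Field K]

def xb (a α r : ℕ) : ℕ := if r = 2 then a - α else a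
def zb (c α r : ℕ) : ℕ := if r = 2 then c + α - 3 else c

def goodT (a c α : ℕ) (t : ℕ × ℕ × ℕ) : Prop :=
  t.2.1 < xb a α t.1 ∧ t.2.2 < zb c α t.1

instance (a c α : ℕ) (t : ℕ × ℕ × ℕ) : Decidable (goodT a c α t) := by
  unfold goodT; infer_instance

def tgt (α : ℕ) (d : Fin 3 →₀ ℕ) : ℕ × ℕ × ℕ :=
  (d 1 % 3, d 0 + α * (d 1 / 3), d 2 + (3 - α) * (d 1 / 3))

noncomputable def gT (a c α : ℕ) (t : ℕ × ℕ × ℕ) : (ℕ × ℕ × ℕ) →₀ K :=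
  if goodT a c α t then Finsupp.single t 1 else 0

noncomputable def Phi (a c α : ℕ) : MvPolynomial (Fin 3) K →ₗ[K] ((ℕ × ℕ × ℕ) →₀ K) :=
  (basisMonomials (Fin 3) K).constr K (fun d => gT K a c α (tgt α d))

lemma Phi_monomial (a c α : ℕ) (d : Fin 3 →₀ ℕ) :
    Phi K a c α (monomial d 1) = gT K a c α (tgt α d) := by
  have h : (monomial d (1:K)) = (basisMonomials (Fin 3) K) d := by
    rw [coe_basisMonomials]
  rw [h, Phi, Module.Basis.constr_basis]

lemma xb_le (a α r : ℕ) : xb a α r ≤ a := by unfold xb; split <;> omega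
lemma zb_le (c α r : ℕ) (hα : α ≤ 3) : zb c α r ≤ c := by unfold zb; split <;> omega

@[simp] lemma apply_add_single (d : Fin 3 →₀ ℕ) (i j : Fin 3) (n : ℕ) :
    (d + Finsupp.single i n) j = d j + if i = j then n else 0 := by
  simp [Finsupp.single_apply]

end Stmt10

namespace Stmt10
variable (K : Type*) [Field K]

lemma fin3_01 : (0:Fin 3) ≠ 1 := by decide
lemma fin3_02 : (0:Fin 3) ≠ 2 := by decide
lemma fin3_10 : (1:Fin 3) ≠ 0 := by decide
lemma fin3_12 : (1:Fin 3) ≠ 2 := by decide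
lemma fin3_20 : (2:Fin 3) ≠ 0 := by decide
lemma fin3_21 : (2:Fin 3) ≠ 1 := by decide

lemma kill1 (a c α : ℕ) (d : Fin 3 →₀ ℕ) :
    Phi K a c α (monomial d 1 * X 0 ^ a) = 0 := by
  rw [X_pow_eq_monomial, monomial_mul, mul_one, Phi_monomial, gT, if_neg]
  rintro ⟨h1, -⟩
  have := xb_le a α ((tgt α (d + Finsupp.single 0 a)).1)
  simp [tgt, fin3_01, fin3_02] at h1 this
  omega

lemma kill3 (a c α : ℕ) (hα : α = 1 ∨ α = 2) (d : Fin 3 →₀ ℕ) :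
    Phi K a c α (monomial d 1 * X 2 ^ c) = 0 := by
  rw [X_pow_eq_monomial, monomial_mul, mul_one, Phi_monomial, gT, if_neg]
  rintro ⟨-, h2⟩
  have := zb_le c α ((tgt α (d + Finsupp.single 2 c)).1) (by omega)
  simp [tgt, fin3_20, fin3_21] at h2 this
  omega

lemma kill2 (a c α : ℕ) (hα : α = 1 ∨ α = 2) (d : Fin 3 →₀ ℕ) :
    Phi K a c α (monomial d 1 * (X 1 ^ 3 - X 0 ^ α * X 2 ^ (3 - α))) = 0 := by
  rw [mul_sub, map_sub, X_pow_eq_monomial, X_pow_eq_monomial, X_pow_eq_monomial,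
    monomial_mul, monomial_mul, monomial_mul]
  simp only [mul_one, one_mul]
  rw [Phi_monomial, Phi_monomial, sub_eq_zero]
  congr 1
  simp only [tgt, ← add_assoc, apply_add_single, fin3_01, fin3_02, fin3_10, fin3_12,
    fin3_20, fin3_21, if_pos rfl, if_neg, Prod.mk.injEq]
  rcases hα with rfl | rfl <;> simp <;> omega

lemma kill4 (a c α : ℕ) (hα : α = 1 ∨ α = 2) (ha : α ≤ a) (d : Fin 3 →₀ ℕ) :
    Phi K a c α (monomial d 1 * (X 0 ^ (a - α) * X 1 ^ 2)) = 0 := by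
  rw [X_pow_eq_monomial, X_pow_eq_monomial, monomial_mul, monomial_mul,
    mul_one, mul_one, Phi_monomial, gT, if_neg]
  rintro ⟨h1, -⟩
  simp only [tgt, ← add_assoc, apply_add_single, fin3_01, fin3_02, fin3_10, fin3_12, xb,
    if_pos rfl, if_neg fin3_01] at h1
  simp at h1
  split_ifs at h1 <;> rcases hα with rfl | rfl <;> omega

lemma kill5 (a c α : ℕ) (hα : α = 1 ∨ α = 2) (hcα : 4 ≤ c + α) (d : Fin 3 →₀ ℕ) :
    Phi K a c α (monomial d 1 * (X 1 ^ 2 * X 2 ^ (c + α - 3))) = 0 := by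
  rw [X_pow_eq_monomial, X_pow_eq_monomial, monomial_mul, monomial_mul,
    mul_one, mul_one, Phi_monomial, gT, if_neg]
  rintro ⟨-, h2⟩
  simp only [tgt, ← add_assoc, apply_add_single, fin3_10, fin3_12, fin3_20, fin3_21, zb,
    if_pos rfl, if_neg fin3_21] at h2
  simp at h2
  split_ifs at h2 <;> rcases hα with rfl | rfl <;> omega

end Stmt10

namespace Stmt10
variable (K : Type*) [Field K]

def Iset (a c α : ℕ) : Set (MvPolynomial (Fin 3) K) :=
  {(X 0 : MvPolynomial (Fin 3) K) ^ a, X 1 ^ 3 - X 0 ^ α * X 2 ^ (3 - α), X 2 ^ c,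
    X 0 ^ (a - α) * X 1 ^ 2, X 1 ^ 2 * X 2 ^ (c + α - 3)}

lemma mul_zero_ext (a c α : ℕ) (G : MvPolynomial (Fin 3) K)
    (hG : ∀ d, Phi K a c α (monomial d 1 * G) = 0) (p : MvPolynomial (Fin 3) K) :
    Phi K a c α (p * G) = 0 := by
  have h : (Phi K a c α).comp (LinearMap.mulRight K G) = 0 := by
    apply (basisMonomials (Fin 3) K).ext
    intro d
    have hb : (basisMonomials (Fin 3) K) d = monomial d 1 :=
      congrFun (coe_basisMonomials (Fin 3) K) d
    simp only [LinearMap.comp_apply, LinearMap.mulRight_apply, LinearMap.zero_apply, hb]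
    exact hG d
  simpa using LinearMap.congr_fun h p

lemma I_le_ker (a c α : ℕ) (hα : α = 1 ∨ α = 2) (ha : α ≤ a) (hcα : 4 ≤ c + α) :
    ∀ f ∈ Ideal.span (Iset K a c α), Phi K a c α f = 0 := by
  have key : ∀ f ∈ Ideal.span (Iset K a c α), ∀ p, Phi K a c α (p * f) = 0 := by
    intro f hf
    refine Submodule.span_induction (p := fun f _ => ∀ p, Phi K a c α (p * f) = 0)
      ?_ ?_ ?_ ?_ hf
    · intro G hG p
      simp only [Iset, Set.mem_insert_iff, Set.mem_singleton_iff] at hG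
      have hmono : ∀ d, Phi K a c α (monomial d 1 * G) = 0 := by
        rcases hG with rfl | rfl | rfl | rfl | rfl
        · exact fun d => kill1 K a c α d
        · exact fun d => kill2 K a c α hα d
        · exact fun d => kill3 K a c α hα d
        · exact fun d => kill4 K a c α hα ha d
        · exact fun d => kill5 K a c α hα hcα d
      exact mul_zero_ext K a c α G hmono p
    · intro p; simp
    · intro f g _ _ hf hg p; rw [mul_add, map_add, hf, hg, add_zero]
    · intro r f _ hf p
      rw [smul_eq_mul, show p * (r * f) = (p * r) * f by ring]
      exact hf (p * r)
  intro f hf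
  simpa using key f hf 1

noncomputable def sFun (t : ℕ × ℕ × ℕ) : MvPolynomial (Fin 3) K :=
  X 0 ^ t.2.1 * X 1 ^ t.1 * X 2 ^ t.2.2

noncomputable def sMap : ((ℕ × ℕ × ℕ) →₀ K) →ₗ[K] MvPolynomial (Fin 3) K :=
  Finsupp.linearCombination K (sFun K)

lemma mono_decomp (d : Fin 3 →₀ ℕ) :
    monomial d (1:K) = X 0 ^ (d 0) * X 1 ^ (d 1) * X 2 ^ (d 2) := by
  have hdd : d = Finsupp.single 0 (d 0) + Finsupp.single 1 (d 1) + Finsupp.single 2 (d 2) := by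
    ext i
    fin_cases i <;> simp [Finsupp.single_apply]
  rw [X_pow_eq_monomial, X_pow_eq_monomial, X_pow_eq_monomial, monomial_mul, monomial_mul]
  simp only [mul_one]
  rw [← hdd]

lemma chain_mem (a c α q : ℕ) :
    ((X 1 : MvPolynomial (Fin 3) K) ^ 3) ^ q - (X 0 ^ α * X 2 ^ (3 - α)) ^ q ∈
      Ideal.span (Iset K a c α) := by
  obtain ⟨w, hw⟩ := sub_dvd_pow_sub_pow ((X 1 : MvPolynomial (Fin 3) K) ^ 3)
    (X 0 ^ α * X 2 ^ (3 - α)) q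
  rw [hw]
  exact Ideal.mul_mem_right _ _ (Ideal.subset_span (by simp [Iset]))

lemma claimA (a c α : ℕ) (d : Fin 3 →₀ ℕ) :
    monomial d (1:K) - sFun K (tgt α d) ∈ Ideal.span (Iset K a c α) := by
  rw [mono_decomp]
  simp only [sFun, tgt]
  set q := d 1 / 3 with hq
  set r := d 1 % 3 with hr
  have hd : d 1 = 3 * q + r := by omega
  rw [hd]
  have halg : (X 0:MvPolynomial (Fin 3) K) ^ (d 0) * X 1 ^ (3 * q + r) * X 2 ^ (d 2) -
      X 0 ^ (d 0 + α * q) * X 1 ^ r * X 2 ^ (d 2 + (3 - α) * q) =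
      (X 0 ^ (d 0) * X 1 ^ r * X 2 ^ (d 2)) *
        (((X 1) ^ 3) ^ q - (X 0 ^ α * X 2 ^ (3 - α)) ^ q) := by
    ring
  rw [halg]
  exact Ideal.mul_mem_left _ _ (chain_mem K a c α q)

end Stmt10

namespace Stmt10
variable (K : Type*) [Field K]

lemma claimB (a c α : ℕ) (t : ℕ × ℕ × ℕ) (ht : t.1 < 3)
    (hbad : ¬ goodT a c α t) : sFun K t ∈ Ideal.span (Iset K a c α) := by
  obtain ⟨r, p, q⟩ := t
  simp only [goodT, not_and_or, not_lt] at hbad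
  simp only [sFun]
  simp only at ht
  rcases hbad with hb | hb
  · -- p ≥ xb a α r
    by_cases hr : r = 2
    · subst hr
      simp [xb] at hb
      have hp : p = (p - (a - α)) + (a - α) := by omega
      rw [hp, pow_add,
        show (X 0:MvPolynomial (Fin 3) K) ^ (p - (a - α)) * X 0 ^ (a - α) * X 1 ^ 2 * X 2 ^ q
          = (X 0 ^ (p - (a - α)) * X 2 ^ q) * (X 0 ^ (a - α) * X 1 ^ 2) by ring]
      exact Ideal.mul_mem_left _ _ (Ideal.subset_span (by simp [Iset]))
    · simp only [xb, if_neg hr] at hb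
      have hp : p = (p - a) + a := by omega
      rw [hp, pow_add,
        show (X 0:MvPolynomial (Fin 3) K) ^ (p - a) * X 0 ^ a * X 1 ^ r * X 2 ^ q
          = (X 0 ^ (p - a) * X 1 ^ r * X 2 ^ q) * (X 0 ^ a) by ring]
      exact Ideal.mul_mem_left _ _ (Ideal.subset_span (by simp [Iset]))
  · -- q ≥ zb c α r
    by_cases hr : r = 2
    · subst hr
      simp [zb] at hb
      have hq : q = (q - (c + α - 3)) + (c + α - 3) := by omega
      rw [hq, pow_add,
        show (X 0:MvPolynomial (Fin 3) K) ^ p * X 1 ^ 2 * (X 2 ^ (q - (c + α - 3)) * X 2 ^ (c + α - 3))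
          = (X 0 ^ p * X 2 ^ (q - (c + α - 3))) * (X 1 ^ 2 * X 2 ^ (c + α - 3)) by ring]
      exact Ideal.mul_mem_left _ _ (Ideal.subset_span (by simp [Iset]))
    · simp only [zb, if_neg hr] at hb
      have hq : q = (q - c) + c := by omega
      rw [hq, pow_add,
        show (X 0:MvPolynomial (Fin 3) K) ^ p * X 1 ^ r * (X 2 ^ (q - c) * X 2 ^ c)
          = (X 0 ^ p * X 1 ^ r * X 2 ^ (q - c)) * (X 2 ^ c) by ring]
      exact Ideal.mul_mem_left _ _ (Ideal.subset_span (by simp [Iset]))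

lemma main_mono (a c α : ℕ) (d : Fin 3 →₀ ℕ) :
    monomial d (1:K) - sMap K (gT K a c α (tgt α d)) ∈ Ideal.span (Iset K a c α) := by
  have hA := claimA K a c α d
  by_cases hg : goodT a c α (tgt α d)
  · rw [gT, if_pos hg]
    rw [sMap, Finsupp.linearCombination_single, one_smul]
    exact hA
  · rw [gT, if_neg hg, map_zero, sub_zero]
    have hB : sFun K (tgt α d) ∈ Ideal.span (Iset K a c α) :=
      claimB K a c α _ (by simp [tgt]; omega) hg
    simpa using (Ideal.span (Iset K a c α)).add_mem hA hB

lemma ker_le_I (a c α : ℕ) (f : MvPolynomial (Fin 3) K)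
    (hf : Phi K a c α f = 0) : f ∈ Ideal.span (Iset K a c α) := by
  set I := Ideal.span (Iset K a c α)
  set mkL := (Ideal.Quotient.mkₐ K I).toLinearMap
  have hT : mkL.comp (LinearMap.id - (sMap K).comp (Phi K a c α)) = 0 := by
    apply (basisMonomials (Fin 3) K).ext
    intro d
    have hb : (basisMonomials (Fin 3) K) d = monomial d 1 :=
      congrFun (coe_basisMonomials (Fin 3) K) d
    simp only [LinearMap.comp_apply, LinearMap.sub_apply, LinearMap.id_apply, hb,
      LinearMap.zero_apply, map_sub]
    have := main_mono K a c α d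
    rw [Phi_monomial]
    show Ideal.Quotient.mk I (monomial d 1 - sMap K (gT K a c α (tgt α d))) = 0
    rw [Ideal.Quotient.eq_zero_iff_mem]
    exact main_mono K a c α d
  have h2 := LinearMap.congr_fun hT f
  simp only [LinearMap.comp_apply, LinearMap.sub_apply, LinearMap.id_apply,
    LinearMap.zero_apply, hf, map_zero, sub_zero] at h2
  rw [← Ideal.Quotient.eq_zero_iff_mem]
  exact h2

end Stmt10

namespace Stmt10
variable (K : Type*) [Field K]

lemma deg3 (d : Fin 3 →₀ ℕ) : d.degree = d 0 + d 1 + d 2 := by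
  rw [Finsupp.degree_apply, Finset.sum_subset (Finset.subset_univ _)
    (fun i _ hi => Finsupp.notMem_support_iff.mp hi), Fin.sum_univ_three]

lemma homog_span (m : ℕ) : homogeneousSubmodule (Fin 3) K m =
    Submodule.span K ((fun d => (monomial d 1 : MvPolynomial (Fin 3) K)) ''
      {d : Fin 3 →₀ ℕ | d.degree = m}) := by
  rw [homogeneousSubmodule_eq_finsupp_supported, AddMonoidAlgebra.supported_eq_span_single]
  congr 1

lemma fd_homog (m : ℕ) : FiniteDimensional K (homogeneousSubmodule (Fin 3) K m) := by
  rw [homog_span]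
  exact FiniteDimensional.span_of_finite K
    (((Finsupp.finite_of_degree_le m).subset (fun d hd => le_of_eq hd)).image _)

lemma hilb_eq (a c α : ℕ) (hα : α = 1 ∨ α = 2) (ha : α ≤ a) (hcα : 4 ≤ c + α) (m : ℕ) :
    hilb K (Ideal.span (Iset K a c α)) m =
      Module.finrank K ((homogeneousSubmodule (Fin 3) K m).map (Phi K a c α)) := by
  classical
  set I := Ideal.span (Iset K a c α)
  set V := homogeneousSubmodule (Fin 3) K m
  have : FiniteDimensional K V := fd_homog K m
  set mkL := (Ideal.Quotient.mkₐ K I).toLinearMap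
  set f1 := mkL.comp V.subtype
  set f2 := (Phi K a c α).comp V.subtype
  have hker : LinearMap.ker mkL = LinearMap.ker (Phi K a c α) := by
    ext f
    simp only [LinearMap.mem_ker]
    constructor
    · intro hf
      apply I_le_ker K a c α hα ha hcα
      rwa [← Ideal.Quotient.eq_zero_iff_mem]
    · intro hf
      have := ker_le_I K a c α f hf
      show Ideal.Quotient.mk I f = 0
      rwa [Ideal.Quotient.eq_zero_iff_mem]
  have hr1 : LinearMap.range f1 = V.map mkL := by
    rw [LinearMap.range_comp, Submodule.range_subtype]
  have hr2 : LinearMap.range f2 = V.map (Phi K a c α) := by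
    rw [LinearMap.range_comp, Submodule.range_subtype]
  have e1 := LinearMap.finrank_range_add_finrank_ker f1
  have e2 := LinearMap.finrank_range_add_finrank_ker f2
  have hkk : LinearMap.ker f1 = LinearMap.ker f2 := by
    rw [LinearMap.ker_comp, LinearMap.ker_comp, hker]
  rw [hr1] at e1
  rw [hr2] at e2
  rw [hkk] at e1
  have : hilb K I m = Module.finrank K (V.map mkL) := rfl
  rw [this]
  omega

end Stmt10

namespace Stmt10
variable (K : Type*) [Field K]

lemma tgt_sum (α : ℕ) (hα : α = 1 ∨ α = 2) (d : Fin 3 →₀ ℕ) :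
    (tgt α d).1 + (tgt α d).2.1 + (tgt α d).2.2 = d 0 + d 1 + d 2 := by
  simp only [tgt]
  rcases hα with rfl | rfl <;> omega

def SF (a c α m : ℕ) : Finset (ℕ × ℕ × ℕ) :=
  (Finset.range 3 ×ˢ Finset.range (m+1) ×ˢ Finset.range (m+1)).filter
    (fun t => goodT a c α t ∧ t.1 + t.2.1 + t.2.2 = m)

lemma map_phi_eq (a c α m : ℕ) (hα : α = 1 ∨ α = 2) :
    (homogeneousSubmodule (Fin 3) K m).map (Phi K a c α) =
      Submodule.span K ((fun t => Finsupp.single t (1:K)) '' ↑(SF a c α m)) := by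
  classical
  rw [homog_span, Submodule.map_span]
  apply le_antisymm
  · rw [Submodule.span_le]
    rintro _ ⟨_, ⟨d, hd, rfl⟩, rfl⟩
    rw [Phi_monomial]
    by_cases hg : goodT a c α (tgt α d)
    · rw [gT, if_pos hg]
      apply Submodule.subset_span
      refine ⟨tgt α d, ?_, rfl⟩
      have hs := tgt_sum α hα d
      have hdeg : d 0 + d 1 + d 2 = m := by
        have := deg3 d; simp only [Set.mem_setOf_eq] at hd; omega
      simp only [SF, Finset.coe_filter, Set.mem_setOf_eq, Finset.mem_product,
        Finset.mem_range]
      refine ⟨⟨?_, ?_, ?_⟩, hg, by omega⟩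
      · simp [tgt]; omega
      · omega
      · omega
    · rw [gT, if_neg hg]; exact zero_mem _
  · rw [Submodule.span_le]
    rintro _ ⟨t, ht, rfl⟩
    simp only [SF, Finset.coe_filter, Set.mem_setOf_eq, Finset.mem_product,
      Finset.mem_range] at ht
    obtain ⟨⟨hr3, hp, hq⟩, hg, hsum⟩ := ht
    apply Submodule.subset_span
    set d0 : Fin 3 →₀ ℕ :=
      Finsupp.single 0 t.2.1 + Finsupp.single 1 t.1 + Finsupp.single 2 t.2.2 with hd0
    have happ0 : d0 0 = t.2.1 := by
      simp [hd0, Finsupp.single_apply, fin3_10, fin3_20]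
    have happ1 : d0 1 = t.1 := by
      simp [hd0, Finsupp.single_apply, fin3_01, fin3_21]
    have happ2 : d0 2 = t.2.2 := by
      simp [hd0, Finsupp.single_apply, fin3_02, fin3_12]
    have htgt : tgt α d0 = t := by
      have h1 : d0 1 % 3 = t.1 := by rw [happ1]; exact Nat.mod_eq_of_lt hr3
      have h2 : d0 1 / 3 = 0 := by rw [happ1]; exact Nat.div_eq_of_lt hr3
      simp only [tgt, h1, h2, Nat.mul_zero, Nat.add_zero, happ0, happ2]
    refine ⟨monomial d0 1, ⟨d0, ?_, rfl⟩, ?_⟩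
    · simp only [Set.mem_setOf_eq]
      rw [deg3, happ0, happ1, happ2]; omega
    · rw [Phi_monomial, htgt, gT, if_pos hg]

lemma finrank_span_SF (a c α m : ℕ) :
    Module.finrank K (Submodule.span K
      ((fun t => Finsupp.single t (1:K)) '' (↑(SF a c α m) : Set (ℕ × ℕ × ℕ)))) =
      (SF a c α m).card := by
  classical
  set s : Finset ((ℕ × ℕ × ℕ) →₀ K) :=
    (SF a c α m).image (fun t => Finsupp.single t (1:K)) with hs
  have h1 : ((fun t => Finsupp.single t (1:K)) '' (↑(SF a c α m) : Set (ℕ × ℕ × ℕ))) = ↑s := by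
    rw [hs, Finset.coe_image]
  have hinj : Function.Injective (fun t : ℕ × ℕ × ℕ => Finsupp.single t (1:K)) :=
    fun x y h => Finsupp.single_left_injective one_ne_zero h
  have li : LinearIndependent K ((↑) : (↑s : Set ((ℕ × ℕ × ℕ) →₀ K)) → ((ℕ × ℕ × ℕ) →₀ K)) := by
    refine LinearIndepOn.mono (v := id) (t := (↑s : Set ((ℕ × ℕ × ℕ) →₀ K)))
      (s := Set.range (fun t : ℕ × ℕ × ℕ => Finsupp.single t (1:K))) ?_ ?_
    rotate_left
    · intro x hx
      rw [hs] at hx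
      simp only [Finset.coe_image, Set.mem_image] at hx
      obtain ⟨t, _, rfl⟩ := hx
      exact ⟨t, rfl⟩
    · have := (Finsupp.basisSingleOne (ι := ℕ × ℕ × ℕ) (R := K)).linearIndependent
      rw [Finsupp.coe_basisSingleOne] at this
      exact (linearIndepOn_id_range_iff hinj).mpr this
  rw [h1, finrank_span_finset_eq_card li, hs, Finset.card_image_of_injective _ hinj]

end Stmt10

namespace Stmt10
variable (K : Type*) [Field K]

lemma card_SF (a c α m : ℕ) :
    (SF a c α m).card = ∑ r ∈ Finset.range 3,
      (min (xb a α r) (m + 1 - r) - (m + 1 - r - zb c α r)) := by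
  classical
  have hSF : SF a c α m = (Finset.range 3).biUnion (fun r =>
      (Finset.Ico (m + 1 - r - zb c α r) (min (xb a α r) (m + 1 - r))).image
        (fun p => (r, p, m - r - p))) := by
    ext t
    obtain ⟨r, p, q⟩ := t
    rw [SF, Finset.mem_filter]
    simp only [Finset.mem_filter, Finset.mem_product, Finset.mem_range,
      Finset.mem_biUnion, Finset.mem_image, Finset.mem_Ico, goodT, Prod.mk.injEq]
    constructor
    · rintro ⟨⟨hr, hp, hq⟩, ⟨hg1, hg2⟩, hs⟩
      exact ⟨r, hr, p, ⟨by omega, by omega⟩, rfl, rfl, by omega⟩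
    · rintro ⟨r', hr', p', ⟨h1, h2⟩, rfl, rfl, rfl⟩
      refine ⟨⟨hr', by omega, by omega⟩, ⟨by omega, by omega⟩, by omega⟩
  rw [hSF, Finset.card_biUnion]
  · apply Finset.sum_congr rfl
    intro r _
    rw [Finset.card_image_of_injective, Nat.card_Ico]
    intro x y h
    exact ((Prod.mk.injEq _ _ _ _).mp ((Prod.mk.injEq _ _ _ _).mp h).2).1
  · intro r _ r' _ hne
    rw [Function.onFun, Finset.disjoint_left]
    rintro t ht ht'
    simp only [Finset.mem_image] at ht ht'
    obtain ⟨p1, _, rfl⟩ := ht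
    obtain ⟨p2, _, heq⟩ := ht'
    exact hne (congrArg Prod.fst heq).symm

lemma master (a c α : ℕ) (hα : α = 1 ∨ α = 2) (ha : α ≤ a) (hcα : 4 ≤ c + α) (m : ℕ) :
    hilb K (Ideal.span (Iset K a c α)) m = ∑ r ∈ Finset.range 3,
      (min (xb a α r) (m + 1 - r) - (m + 1 - r - zb c α r)) := by
  rw [hilb_eq K a c α hα ha hcα m, map_phi_eq K a c α m hα, finrank_span_SF, card_SF]

end Stmt10


lemma hval (K : Type*) [Field K] (a c α : ℕ)
    (hc : 2 ≤ c) (hac : c ≤ a) (hα : α = 1 ∨ α = 2) (hcα : 4 ≤ c + α) (m : ℕ) :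
    hilb K (Ideal.span (Stmt10.Iset K a c α)) m =
      (min a (m + 1) - (m + 1 - c)) + ((min a m - (m - c)) +
        (min (a - α) (m - 1) - (m - 1 - (c + α - 3)))) := by
  rw [Stmt10.master K a c α hα (by omega) (by omega) m,
    Finset.sum_range_succ, Finset.sum_range_succ, Finset.sum_range_one]
  simp only [Stmt10.xb, Stmt10.zb]
  norm_num
  omega


set_option maxHeartbeats 1600000 in
theorem stmt_10 (K : Type*) [Field K] [CharZero K] (a c α : ℕ)
    (hc : 2 ≤ c) (hac : c ≤ a) (hα : α = 1 ∨ α = 2) (hcα : 4 ≤ c + α) :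
    let I : Ideal (MvPolynomial (Fin 3) K) := Ideal.span
      {(X 0 : MvPolynomial (Fin 3) K) ^ a, X 1 ^ 3 - X 0 ^ α * X 2 ^ (3 - α), X 2 ^ c,
        X 0 ^ (a - α) * X 1 ^ 2, X 1 ^ 2 * X 2 ^ (c + α - 3)}
    let k : ℕ := (a + c - 1) / 2
    ((a = c → hilb K I k = 3 * c - 3) ∧
     (c + 1 ≤ a → hilb K I k = 3 * c - 3 + α) ∧
     (c + 3 ≤ a → hilb K I k = hilb K I (k - 1))) := by
  show ((a = c → hilb K (Ideal.span (Stmt10.Iset K a c α)) ((a + c - 1) / 2) = 3 * c - 3) ∧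
     (c + 1 ≤ a → hilb K (Ideal.span (Stmt10.Iset K a c α)) ((a + c - 1) / 2) = 3 * c - 3 + α) ∧
     (c + 3 ≤ a → hilb K (Ideal.span (Stmt10.Iset K a c α)) ((a + c - 1) / 2) =
        hilb K (Ideal.span (Stmt10.Iset K a c α)) ((a + c - 1) / 2 - 1)))
  rw [hval K a c α hc hac hα hcα ((a + c - 1) / 2),
    hval K a c α hc hac hα hcα ((a + c - 1) / 2 - 1)]
  refine ⟨fun h => ?_, fun h => ?_, fun h => ?_⟩ <;> rcases hα with rfl | rfl <;> omega
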